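/- Let σ be a finite alphabet and φ : σ → (ℤ → ℤ) assign to each letter e an affine function φ(e)(z) = a_e·z + b_e with a_e > 0. For a word s = e_1…e_K over σ let P_s = φ(e_K) ∘ ⋯ ∘ φ(e_1), and for z ∈ ℤ and a regular expression E over σ define I(z, E) to mean: there exists a word s in the language of E with P_s(z) > z. Then for every z ∈ ℤ and every regular expression α over σ: I(z, α*) holds if and only if I(z, α) holds. -/

import Mathlib

/-- `wordP φ s z` applies `P_s = φ(e_K) ∘ ⋯ ∘ φ(e_1)` to `z`, for the word `s = e_1…e_K`. -/
def wordP {σ : Type*} (φ : σ → ℤ → ℤ) (s : List σ) (z : ℤ) : ℤ :=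
  s.foldl (fun w e => φ e w) z

/-- `I(z, E)`: some word `s` in the language of `E` satisfies `P_s(z) > z`. -/
def Incr {σ : Type*} (φ : σ → ℤ → ℤ) (z : ℤ) (E : RegularExpression σ) : Prop :=
  ∃ s ∈ E.matches', z < wordP φ s z

lemma wordP_mono {σ : Type*} (φ : σ → ℤ → ℤ)
    (hφ : ∀ e : σ, ∃ a b : ℤ, 0 < a ∧ ∀ z : ℤ, φ e z = a * z + b)
    (s : List σ) : Monotone (wordP φ s) := by
  induction s with
  | nil => exact fun _ _ h => h
  | cons e s ih =>
    intro z1 z2 h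
    have : φ e z1 ≤ φ e z2 := by
      obtain ⟨a, b, ha, he⟩ := hφ e
      rw [he z1, he z2]
      have := mul_le_mul_of_nonneg_left h ha.le
      linarith
    exact ih this

lemma wordP_join_le {σ : Type*} (φ : σ → ℤ → ℤ)
    (hφ : ∀ e : σ, ∃ a b : ℤ, 0 < a ∧ ∀ z : ℤ, φ e z = a * z + b)
    (z : ℤ) (L : List (List σ)) (h : ∀ s ∈ L, wordP φ s z ≤ z) :
    wordP φ L.flatten z ≤ z := by
  induction L with
  | nil => simp [wordP]
  | cons s L ih =>
    have h1 : wordP φ s z ≤ z := h s (by simp)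
    have h2 : wordP φ L.flatten z ≤ z := ih fun t ht => h t (by simp [ht])
    have : wordP φ (s ++ L.flatten) z = wordP φ L.flatten (wordP φ s z) := by
      simp [wordP, List.foldl_append]
    rw [List.flatten_cons, this]
    exact le_trans (wordP_mono φ hφ L.flatten h1) h2

/-- For a regular expression `α` over a finite alphabet `σ` whose letters denote affine
functions with positive linear coefficients, `I(z, α*) ↔ I(z, α)`. -/
theorem incr_star (σ : Type*) [Fintype σ] (φ : σ → ℤ → ℤ)
    (hφ : ∀ e : σ, ∃ a b : ℤ, 0 < a ∧ ∀ z : ℤ, φ e z = a * z + b)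
    (z : ℤ) (α : RegularExpression σ) :
    Incr φ z α.star ↔ Incr φ z α := by
  constructor
  · rintro ⟨s, hs, hz⟩
    rw [RegularExpression.matches'_star, Language.mem_kstar] at hs
    obtain ⟨L, rfl, hL⟩ := hs
    by_contra hI
    unfold Incr at hI
    push_neg at hI
    exact absurd hz (not_lt.mpr (wordP_join_le φ hφ z L fun t ht => hI t (hL t ht)))
  · rintro ⟨s, hs, hz⟩
    refine ⟨s, ?_, hz⟩
    rw [RegularExpression.matches'_star, Language.mem_kstar]
    exact ⟨[s], by simp, by simpa using hs⟩
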